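/- Let K ⊆ L be a field extension and f ∈ K[[t]] a formal power series. If the image of f in L[[t]] is the expansion of a rational function over L (i.e., there exist P, Q ∈ L[t] with Q ≠ 0 and Q·f = P in L[[t]]), then f is already the expansion of a rational function over K: there exist P', Q' ∈ K[t] with Q' ≠ 0 and Q'·f = P' in K[[t]]. -/

import Mathlib

section Aux

variable {K L : Type*} [Field K] [Field L] [Algebra K L]

/-- Apply a `K`-linear functional coefficientwise to a polynomial over `L`. -/
noncomputable def polyApply (ℓ : L →ₗ[K] K) (P : Polynomial L) : Polynomial K :=
  ⟨⟨P.toFinsupp.coeff.mapRange ℓ ℓ.map_zero⟩⟩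

@[simp] lemma polyApply_coeff (ℓ : L →ₗ[K] K) (P : Polynomial L) (n : ℕ) :
    (polyApply ℓ P).coeff n = ℓ (P.coeff n) := rfl

end Aux

/-- Descent of rationality of a power series along a field extension `K ⊆ L`, as used in
Deligne's Weil I to show `Z(X₀, t) ∈ ℤ[[t]] ∩ ℚ_l(t) ⊆ ℚ(t)`: if the image of
`f ∈ K[[t]]` in `L[[t]]` is the expansion of a rational function over `L`, then `f` is
the expansion of a rational function over `K`. -/
theorem powerSeries_rational_descent_of_rational_over_extension
    {K L : Type*} [Field K] [Field L] [Algebra K L] (f : PowerSeries K)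
    (h : ∃ P Q : Polynomial L, Q ≠ 0 ∧
      (Q : PowerSeries L) * PowerSeries.map (algebraMap K L) f = (P : PowerSeries L)) :
    ∃ P' Q' : Polynomial K, Q' ≠ 0 ∧ (Q' : PowerSeries K) * f = (P' : PowerSeries K) := by
  obtain ⟨P, Q, hQ, hPQ⟩ := h
  obtain ⟨x, hx⟩ : ∃ x, Q.coeff x ≠ 0 := by
    by_contra hc
    push_neg at hc
    exact hQ (Polynomial.ext fun n => by simp [hc n])
  obtain ⟨ℓ, hℓ⟩ : ∃ ℓ : L →ₗ[K] K, ℓ (Q.coeff x) ≠ 0 := by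
    let B := Module.Basis.ofVectorSpace K L
    obtain ⟨b, hb⟩ : ∃ b, B.repr (Q.coeff x) b ≠ 0 := by
      by_contra hc
      push_neg at hc
      apply hx
      have : B.repr (Q.coeff x) = 0 := Finsupp.ext fun b => hc b
      simpa [this] using (B.repr.symm_apply_apply (Q.coeff x)).symm
    exact ⟨B.coord b, hb⟩
  refine ⟨polyApply ℓ P, polyApply ℓ Q, ?_, ?_⟩
  · intro h0
    exact hℓ (by simpa using congrArg (fun p => Polynomial.coeff p x) h0)
  · ext n
    have key := congrArg (fun g => ℓ (PowerSeries.coeff n g)) hPQ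
    simp only [PowerSeries.coeff_mul, Polynomial.coeff_coe, PowerSeries.coeff_map,
      map_sum] at key ⊢
    rw [polyApply_coeff, ← key]
    refine Finset.sum_congr rfl fun p _ => ?_
    rw [polyApply_coeff]
    have : Q.coeff p.1 * algebraMap K L (PowerSeries.coeff p.2 f)
        = (PowerSeries.coeff p.2 f) • (Q.coeff p.1) := by
      rw [Algebra.smul_def, mul_comm]
    rw [this, map_smul, smul_eq_mul, mul_comm]
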